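/- Pushing lemma: Let S be a multiway cut of a Directed Multiway Cut instance (G,T) and let v be in the reverse shadow of S. Then either S contains a subset S_v that is an important v–T separator, or there exists another multiway cut S' with |S'| ≤ |S|, r(S) ⊊ r(S'), and r(S) ∪ f(S) ∪ S ⊆ r(S') ∪ f(S') ∪ S'. -/

import Mathlib

variable {V : Type*}

/-- A single edge step in `G \ S`: an edge of `E` with both endpoints outside `S`. -/
def DStep (E : V → V → Prop) (S : Set V) (a b : V) : Prop :=
  E a b ∧ a ∉ S ∧ b ∉ S

/-- `b` is reachable from `a` by a directed path in `G \ S`. -/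
def DReach (E : V → V → Prop) (S : Set V) (a b : V) : Prop :=
  Relation.ReflTransGen (DStep E S) a b

/-- The set of vertices reachable from the set `X` in `G \ S`. -/
def RSet (E : V → V → Prop) (S X : Set V) : Set V :=
  {v | ∃ x ∈ X, DReach E S x v}

/-- `S` is an `X`–`Y` separator: disjoint from `X ∪ Y` and destroying all `X → Y` paths. -/
def IsSep (E : V → V → Prop) (X Y S : Set V) : Prop :=
  S ∩ (X ∪ Y) = ∅ ∧ ∀ x ∈ X, ∀ y ∈ Y, ¬ DReach E S x y

/-- `S` is an inclusion-wise minimal `X`–`Y` separator. -/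
def IsMinSep (E : V → V → Prop) (X Y S : Set V) : Prop :=
  IsSep E X Y S ∧ ∀ S', S' ⊂ S → ¬ IsSep E X Y S'

/-- `S` is an important `X`–`Y` separator: a minimal separator such that no separator of at
most the same size has a strictly larger set of vertices reachable from `X`. -/
def IsImpSep (E : V → V → Prop) (X Y S : Set V) : Prop :=
  IsMinSep E X Y S ∧
    ¬ ∃ S', IsSep E X Y S' ∧ S'.ncard ≤ S.ncard ∧ RSet E S X ⊂ RSet E S' X

/-- `S` is a (vertex) multiway cut of `(G, T)`. -/
def IsMWC (E : V → V → Prop) (T S : Set V) : Prop :=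
  S ∩ T = ∅ ∧ ∀ t₁ ∈ T, ∀ t₂ ∈ T, t₁ ≠ t₂ → ¬ DReach E S t₁ t₂

/-- The forward shadow of `S` with respect to `T`: vertices outside `S ∪ T` not reachable
from `T` in `G \ S`. -/
def fShadow (E : V → V → Prop) (T S : Set V) : Set V :=
  {v | v ∉ S ∧ v ∉ T ∧ ∀ t ∈ T, ¬ DReach E S t v}

/-- The reverse shadow of `S` with respect to `T`: vertices outside `S ∪ T` that cannot
reach `T` in `G \ S`. -/
def rShadow (E : V → V → Prop) (T S : Set V) : Set V :=
  {v | v ∉ S ∧ v ∉ T ∧ ∀ t ∈ T, ¬ DReach E S v t}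

/-- The adjacency of `torso(G, C)`: an edge `(a, b)` whenever `a, b ∈ C` and `G` has a
directed `a → b` path whose internal vertices all lie outside `C`. -/
def TorsoAdj (E : V → V → Prop) (C : Set V) (a b : V) : Prop :=
  a ∈ C ∧ b ∈ C ∧ ∃ w, E a w ∧ Relation.ReflTransGen (fun x y => x ∉ C ∧ E x y) w b


section PushingHelpers

variable {E : V → V → Prop} {A X Y : Set V} {a b : V}

lemma dstep_mono (hXY : X ⊆ Y) (h : DStep E Y a b) : DStep E X a b :=
  ⟨h.1, fun hx => h.2.1 (hXY hx), fun hy => h.2.2 (hXY hy)⟩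

lemma dmono (hXY : X ⊆ Y) (h : DReach E Y a b) : DReach E X a b :=
  Relation.ReflTransGen.mono (fun _ _ hs => dstep_mono hXY hs) _ _ h

lemma dreach_not_mem (h : DReach E X a b) (ha : a ∉ X) : b ∉ X := by
  induction h with
  | refl => exact ha
  | tail _ hstep _ => exact hstep.2.2

lemma dreach_eq_of_mem (h : DReach E X a b) (ha : a ∈ X) : a = b := by
  induction h with
  | refl => rfl
  | tail _ hstep ih => exact absurd (ih ▸ ha) hstep.2.1

lemma firstHit {r : V → V → Prop} {C : Set V} {a b : V}
    (h : Relation.ReflTransGen r a b) :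
    a ∉ C →
    (Relation.ReflTransGen (fun x y => r x y ∧ x ∉ C ∧ y ∉ C) a b ∨
      ∃ w ∈ C, ∃ u, Relation.ReflTransGen (fun x y => r x y ∧ x ∉ C ∧ y ∉ C) a u ∧
        r u w ∧ Relation.ReflTransGen r w b) := by
  induction h using Relation.ReflTransGen.head_induction_on with
  | refl => exact fun _ => Or.inl .refl
  | head h' hrest ih =>
      rename_i x c
      intro ha
      by_cases hc : c ∈ C
      · exact Or.inr ⟨c, hc, x, .refl, h', hrest⟩
      · rcases ih hc with h1 | ⟨w, hw, u, h1, h2, h3⟩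
        · exact Or.inl (h1.head ⟨h', ha, hc⟩)
        · exact Or.inr ⟨w, hw, u, h1.head ⟨h', ha, hc⟩, h2, h3⟩

lemma lastHit {r : V → V → Prop} {C : Set V} {a b : V}
    (h : Relation.ReflTransGen r a b) :
    b ∉ C →
    (Relation.ReflTransGen (fun x y => r x y ∧ x ∉ C ∧ y ∉ C) a b ∨
      ∃ w ∈ C, Relation.ReflTransGen r a w ∧ ∃ u, r w u ∧ u ∉ C ∧
        Relation.ReflTransGen (fun x y => r x y ∧ x ∉ C ∧ y ∉ C) u b) := by
  induction h with
  | refl => exact fun _ => Or.inl .refl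
  | tail hrest hstep ih =>
      rename_i c b'
      intro hb
      by_cases hc : c ∈ C
      · exact Or.inr ⟨c, hc, hrest, b', hstep, hb, .refl⟩
      · rcases ih hc with h1 | ⟨w, hw, h1, u, h2, h3, h4⟩
        · exact Or.inl (h1.tail ⟨hstep, hc, hb⟩)
        · exact Or.inr ⟨w, hw, h1, u, h2, h3, h4.tail ⟨hstep, hc, hb⟩⟩

lemma restr_to_union {C : Set V} {x y : V}
    (h : Relation.ReflTransGen (fun x y => DStep E A x y ∧ x ∉ C ∧ y ∉ C) x y) :
    DReach E (A ∪ C) x y :=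
  Relation.ReflTransGen.mono
    (fun _ _ hs => ⟨hs.1.1, fun hm => hm.elim hs.1.2.1 hs.2.1,
      fun hm => hm.elim hs.1.2.2 hs.2.2⟩) _ _ h

lemma dfirst (E : V → V → Prop) (A C : Set V) {a b : V}
    (h : DReach E A a b) (ha : a ∉ C) :
    DReach E (A ∪ C) a b ∨
      ∃ w ∈ C, ∃ u, DReach E (A ∪ C) a u ∧ DStep E A u w ∧ DReach E A w b := by
  rcases firstHit h ha with h1 | ⟨w, hw, u, h1, h2, h3⟩
  · exact Or.inl (restr_to_union h1)
  · exact Or.inr ⟨w, hw, u, restr_to_union h1, h2, h3⟩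

lemma dlast (E : V → V → Prop) (A C : Set V) {a b : V}
    (h : DReach E A a b) (hb : b ∉ C) :
    DReach E (A ∪ C) a b ∨
      ∃ w ∈ C, DReach E A a w ∧ ∃ u, DStep E A w u ∧ u ∉ C ∧ DReach E (A ∪ C) u b := by
  rcases lastHit h hb with h1 | ⟨w, hw, h1, u, h2, h3, h4⟩
  · exact Or.inl (restr_to_union h1)
  · exact Or.inr ⟨w, hw, h1, u, h2, h3, restr_to_union h4⟩

end PushingHelpers

/-- **pushing lemma.** For a multiway cut `S` and `v` in its reverse shadow,
either `S` contains an important `v`–`T` separator, or there is a multiway cut `S'` with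
`|S'| ≤ |S|`, `r(S) ⊊ r(S')` and `r(S) ∪ f(S) ∪ S ⊆ r(S') ∪ f(S') ∪ S'`. -/
theorem pushing [Fintype V] (E : V → V → Prop) (T S : Set V) (v : V)
    (h : IsMWC E T S) (hv : v ∈ rShadow E T S) :
    (∃ Sv, Sv ⊆ S ∧ IsImpSep E {v} T Sv) ∨
      ∃ S', IsMWC E T S' ∧ S'.ncard ≤ S.ncard ∧
        rShadow E T S ⊂ rShadow E T S' ∧
        rShadow E T S ∪ fShadow E T S ∪ S ⊆ rShadow E T S' ∪ fShadow E T S' ∪ S' := by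
  classical
  obtain ⟨hvS, hvT, hvreach⟩ := hv
  have hST : S ∩ T = ∅ := h.1
  have hSTmem : ∀ x ∈ S, x ∉ T := fun x hx hxT =>
    Set.eq_empty_iff_forall_notMem.mp hST x ⟨hx, hxT⟩
  have hSsep : IsSep E {v} T S := by
    constructor
    · apply Set.eq_empty_iff_forall_notMem.mpr
      rintro x ⟨hxS, hx⟩
      rcases hx with hx | hx
      · exact hvS (hx ▸ hxS)
      · exact hSTmem x hxS hx
    · rintro x hx t ht
      have hxv : x = v := hx
      subst hxv
      exact hvreach t ht
  set 𝒮 := {A : Set V | A ⊆ S ∧ IsSep E {v} T A} with h𝒮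
  have hS𝒮 : S ∈ 𝒮 := ⟨subset_rfl, hSsep⟩
  have hne : (Set.ncard '' 𝒮).Nonempty := ⟨_, ⟨S, hS𝒮, rfl⟩⟩
  obtain ⟨Sv, hSv𝒮, hSvcard⟩ := Nat.sInf_mem hne
  have hmin : ∀ A ∈ 𝒮, Sv.ncard ≤ A.ncard := by
    intro A hA
    rw [hSvcard]
    exact Nat.sInf_le ⟨A, hA, rfl⟩
  obtain ⟨hSvS, hSvsep⟩ := hSv𝒮
  have hSvfin : Sv.Finite := Set.toFinite _
  have hSvMin : IsMinSep E {v} T Sv := by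
    refine ⟨hSvsep, fun S₀ hsub hsep => ?_⟩
    have h1 := hmin S₀ ⟨hsub.subset.trans hSvS, hsep⟩
    have h2 : S₀.ncard < Sv.ncard := Set.ncard_lt_ncard hsub hSvfin
    omega
  by_cases himp : IsImpSep E {v} T Sv
  · exact Or.inl ⟨Sv, hSvS, himp⟩
  right
  have hex : ∃ S'', IsSep E {v} T S'' ∧ S''.ncard ≤ Sv.ncard ∧
      RSet E Sv {v} ⊂ RSet E S'' {v} := by
    by_contra hc
    exact himp ⟨hSvMin, hc⟩
  obtain ⟨S'', hsep'', hcard'', hdom⟩ := hex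
  have hRsub : RSet E Sv {v} ⊆ RSet E S'' {v} := subset_of_ssubset hdom
  have hvS'' : v ∉ S'' := fun hx =>
    Set.eq_empty_iff_forall_notMem.mp hsep''.1 v ⟨hx, Or.inl rfl⟩
  have hS''T : ∀ x ∈ S'', x ∉ T := fun x hx hxT =>
    Set.eq_empty_iff_forall_notMem.mp hsep''.1 x ⟨hx, Or.inr hxT⟩
  have hSvT : ∀ x ∈ Sv, x ∉ T := fun x hx hxT =>
    Set.eq_empty_iff_forall_notMem.mp hSvsep.1 x ⟨hx, Or.inr hxT⟩
  have hvSv : v ∉ Sv := fun hx =>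
    Set.eq_empty_iff_forall_notMem.mp hSvsep.1 v ⟨hx, Or.inl rfl⟩
  set U := S'' ∩ rShadow E T S with hU
  set B := (Sv \ S'') ∪ U with hB
  set S' := (S \ Sv) ∪ (S'' \ U) with hS'def
  have hUS : ∀ x ∈ U, x ∉ S := fun x hx => hx.2.1
  have hUT : ∀ x ∈ U, x ∉ T := fun x hx => hx.2.2.1
  -- every vertex of Sv \ S'' is reachable from v in G \ S''
  have hSvreach : ∀ w ∈ Sv \ S'', DReach E S'' v w := by
    rintro w ⟨hwSv, hwS''⟩
    have hvw : v ∉ ({w} : Set V) := by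
      intro hx
      exact hvSv ((show v = w from hx) ▸ hwSv)
    have hnotsep : ¬ IsSep E {v} T (Sv \ {w}) := by
      intro hsep
      have h1 := hmin _ ⟨Set.diff_subset.trans hSvS, hsep⟩
      have h2 : (Sv \ {w}).ncard < Sv.ncard :=
        Set.ncard_diff_singleton_lt_of_mem hwSv hSvfin
      omega
    have hdisj : (Sv \ {w}) ∩ ({v} ∪ T) = ∅ :=
      Set.subset_empty_iff.mp (by
        rw [← hSvsep.1]
        exact Set.inter_subset_inter_left _ Set.diff_subset)
    have hexc : ∃ t ∈ T, DReach E (Sv \ {w}) v t := by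
      by_contra hc
      push_neg at hc
      refine hnotsep ⟨hdisj, ?_⟩
      rintro x hx t ht
      have hxv : x = v := hx
      subst hxv
      exact hc t ht
    obtain ⟨t, ht, hvt⟩ := hexc
    have hunion : (Sv \ {w}) ∪ {w} = Sv := by
      rw [Set.diff_union_self]
      exact Set.union_eq_self_of_subset_right (by simpa using hwSv)
    rcases dfirst E (Sv \ {w}) {w} hvt hvw with h1 | ⟨w', hw', u, h1, h2, h3⟩
    · rw [hunion] at h1
      exact absurd h1 (hSvsep.2 v rfl t ht)
    · have hw'w : w' = w := hw'
      subst hw'w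
      rw [hunion] at h1
      have hu : u ∈ RSet E Sv {v} := ⟨v, rfl, h1⟩
      obtain ⟨x, hx, hr⟩ := hRsub hu
      have hxv : x = v := hx
      subst hxv
      have huS'' : u ∉ S'' := dreach_not_mem hr hvS''
      exact hr.trans (Relation.ReflTransGen.single ⟨h2.1, huS'', hwS''⟩)
  have hSsub : S ⊆ S' ∪ B := by
    intro x hx
    by_cases h1 : x ∈ Sv
    · by_cases h2 : x ∈ S''
      · exact Or.inl (Or.inr ⟨h2, fun hxU => hUS x hxU hx⟩)
      · exact Or.inr (Or.inl ⟨h1, h2⟩)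
    · exact Or.inl (Or.inl ⟨hx, h1⟩)
  have hS''sub : S'' ⊆ S' ∪ B := by
    intro x hx
    by_cases h2 : x ∈ U
    · exact Or.inr (Or.inr h2)
    · exact Or.inl (Or.inr ⟨hx, h2⟩)
  -- key lemma: no vertex of B can reach T in G \ S'
  have hL : ∀ x ∈ B, ∀ t ∈ T, ¬ DReach E S' x t := by
    rintro x hxB t ht hreach
    have htB : t ∉ B := by
      rintro (⟨htSv, -⟩ | htU)
      · exact hSvT t htSv ht
      · exact hUT t htU ht
    rcases dlast E S' B hreach htB with h1 | ⟨w, hwB, hxw, u, hstep, huB, htail⟩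
    · have heq := dreach_eq_of_mem h1 (Or.inr hxB)
      exact htB (heq ▸ hxB)
    · have huSB : u ∉ S' ∪ B := fun hmem => hmem.elim hstep.2.2 huB
      have huS : u ∉ S := fun hu => huSB (hSsub hu)
      have huS'' : u ∉ S'' := fun hu => huSB (hS''sub hu)
      rcases hwB with ⟨hwSv, hwS''⟩ | hwU
      · have h1 : DReach E S'' v w := hSvreach w ⟨hwSv, hwS''⟩
        have h2 : DReach E S'' u t := dmono hS''sub htail
        exact hsep''.2 v rfl t ht
          (h1.trans ((Relation.ReflTransGen.single ⟨hstep.1, hwS'', huS''⟩).trans h2))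
      · have h2 : DReach E S u t := dmono hSsub htail
        exact hwU.2.2.2 t ht
          ((Relation.ReflTransGen.single ⟨hstep.1, hUS w hwU, huS⟩).trans h2)
  have hSdiff : ∀ w ∈ S, w ∉ S' → w ∈ B := by
    intro w hw hw'
    by_cases h1 : w ∈ Sv
    · by_cases h2 : w ∈ S''
      · exact absurd (Or.inr ⟨h2, fun hxU => hUS w hxU hw⟩) hw'
      · exact Or.inl ⟨h1, h2⟩
    · exact absurd (Or.inl ⟨hw, h1⟩) hw'
  -- no-escape lemma
  have hN : ∀ x, x ∉ S → (∀ t ∈ T, ¬ DReach E S x t) → ∀ t ∈ T, ¬ DReach E S' x t := by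
    intro x hxS hx t ht hreach
    rcases dfirst E S' S hreach hxS with h1 | ⟨w, hwS, u, h1, h2, h3⟩
    · exact hx t ht (dmono Set.subset_union_right h1)
    · exact hL w (hSdiff w hwS h2.2.2) t ht h3
  have hS'T : ∀ x ∈ S', x ∉ T := by
    rintro x (⟨hxS, -⟩ | ⟨hxS'', -⟩) hxT
    · exact hSTmem x hxS hxT
    · exact hS''T x hxS'' hxT
  have hMWC' : IsMWC E T S' := by
    constructor
    · apply Set.eq_empty_iff_forall_notMem.mpr
      rintro x ⟨hx1, hx2⟩
      exact hS'T x hx1 hx2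
    · intro t₁ ht₁ t₂ ht₂ hneq hreach
      rcases dfirst E S' S hreach (fun hc => hSTmem t₁ hc ht₁) with
        h1 | ⟨w, hwS, u, h1, h2, h3⟩
      · exact h.2 t₁ ht₁ t₂ ht₂ hneq (dmono Set.subset_union_right h1)
      · exact hL w (hSdiff w hwS h2.2.2) t₂ ht₂ h3
  have hcard' : S'.ncard ≤ S.ncard := by
    have h1 : S'.ncard ≤ (S \ Sv).ncard + (S'' \ U).ncard := Set.ncard_union_le _ _
    have h2 : (S \ Sv).ncard = S.ncard - Sv.ncard := Set.ncard_diff hSvS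
    have h3 : (S'' \ U).ncard ≤ S''.ncard :=
      Set.ncard_le_ncard Set.diff_subset (Set.toFinite _)
    have h4 : Sv.ncard ≤ S.ncard := Set.ncard_le_ncard hSvS (Set.toFinite _)
    omega
  have hwex : ∃ w₀, w₀ ∈ Sv \ S'' := by
    by_contra hc
    push_neg at hc
    have hsub2 : Sv ⊆ S'' := fun x hx => by
      by_contra hx2
      exact (hc x) ⟨hx, hx2⟩
    have heq : Sv = S'' := Set.eq_of_subset_of_ncard_le hsub2 hcard'' (Set.toFinite _)
    rw [heq] at hdom
    exact (ssubset_irrefl _) hdom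
  obtain ⟨w₀, hw₀⟩ := hwex
  have hw₀S' : w₀ ∉ S' := by
    rintro (⟨-, h2⟩ | ⟨h2, -⟩)
    · exact h2 hw₀.1
    · exact hw₀.2 h2
  have hw₀r' : w₀ ∈ rShadow E T S' :=
    ⟨hw₀S', hSvT w₀ hw₀.1, fun t ht => hL w₀ (Or.inl hw₀) t ht⟩
  have hrsub : rShadow E T S ⊆ rShadow E T S' := by
    rintro x ⟨hx1, hx2, hx3⟩
    refine ⟨?_, hx2, hN x hx1 hx3⟩
    rintro (⟨hxS, -⟩ | ⟨hxS'', hxU⟩)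
    · exact hx1 hxS
    · exact hxU ⟨hxS'', hx1, hx2, hx3⟩
  refine ⟨S', hMWC', hcard', ⟨hrsub, fun hcc => ?_⟩, ?_⟩
  · exact (hcc hw₀r').1 (hSvS hw₀.1)
  · rintro x (hx | hxS)
    · rcases hx with hxr | hxf
      · exact Or.inl (Or.inl (hrsub hxr))
      · obtain ⟨hx1, hx2, hx3⟩ := hxf
        by_cases hxS'' : x ∈ S'' \ U
        · exact Or.inr (Or.inr hxS'')
        · have hxS' : x ∉ S' := by
            rintro (⟨hxS, -⟩ | hmem)
            · exact hx1 hxS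
            · exact hxS'' hmem
          by_cases hp : ∃ t ∈ T, DReach E S' t x
          · obtain ⟨t, ht, htx⟩ := hp
            refine Or.inl (Or.inl ⟨hxS', hx2, fun t₂ ht₂ hx₂ => ?_⟩)
            rcases dfirst E S' S htx (fun hc => hSTmem t hc ht) with
              h1 | ⟨w, hwS, u, h1, h2, h3⟩
            · exact hx3 t ht (dmono Set.subset_union_right h1)
            · exact hL w (hSdiff w hwS h2.2.2) t₂ ht₂ (h3.trans hx₂)
          · push_neg at hp
            exact Or.inl (Or.inr ⟨hxS', hx2, hp⟩)
    · by_cases h1 : x ∈ Sv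
      · by_cases h2 : x ∈ S''
        · exact Or.inr (Or.inr ⟨h2, fun hxU => hUS x hxU hxS⟩)
        · refine Or.inl (Or.inl ⟨?_, hSvT x h1, fun t ht => hL x (Or.inl ⟨h1, h2⟩) t ht⟩)
          rintro (⟨-, hc⟩ | ⟨hc, -⟩)
          · exact hc h1
          · exact h2 hc
      · exact Or.inr (Or.inl ⟨hxS, h1⟩)
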